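/- Let X be a compact metric space, f : X → X a homeomorphism, φ, ψ : X → ℝ continuous functions, 0 < λ < λ₁ < λ₂ < 1 constants with φ(x) + ψ(f(x)) < 2 log λ for all x ∈ X, and δ > 0. Assume: (i) q ∈ X is a periodic point of f whose orbit is a δ-net of X and which satisfies ∑_{i=0}^{k-1} φ(f^i(q)) ≤ k log λ and ∑_{i=0}^{k-1} ψ(f^{-i}(q)) ≤ k log λ for every k ≥ 1; (ii) there exists b ∈ X with ∑_{i=0}^{k-1} φ(f^i(b)) ≥ 0 for every k ≥ 1. Then there exist n ≥ 1 and points x_0, x_1, …, x_n ∈ X with d(f(x_i), x_{i+1}) < δ for all 0 ≤ i < n and x_0 = x_n = q, such that: (1) ∑_{i=0}^{k-1} φ(x_i) < k log λ₂ and ∑_{i=k}^{n} ψ(x_i) < (n-k+1) log λ₂ for every 1 ≤ k ≤ n; (2) ∑_{i=0}^{n-1} φ(x_i) > n log λ₁. -/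

import Mathlib

private lemma homeo_perm_pow_apply {X : Type*} [MetricSpace X] (f : X ≃ₜ X) (k : ℕ) (x : X) :
    (f.toEquiv ^ (k : ℤ)) x = (⇑f)^[k] x := by
  rw [zpow_natCast]
  induction k generalizing x with
  | zero => rfl
  | succ n ih =>
    rw [pow_succ, Equiv.Perm.mul_apply, Function.iterate_succ_apply]
    exact ih (f x)

set_option maxHeartbeats 2000000

/-- The abstract form of Lemma 4.3: given a 'good' periodic point `q` whose orbit is a
`δ`-net and a 'bad' point `b` with nonnegative Birkhoff sums of `φ`, one constructs a
`δ`-pseudo-orbit from `q` to itself which is `λ₂`-good in both directions but whose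
total `φ`-sum exceeds `n log λ₁`. -/
theorem exists_pseudo_orbit_good_but_not_contracting {X : Type*} [MetricSpace X]
    [CompactSpace X] (f : X ≃ₜ X) (φ ψ : X → ℝ) (hφ : Continuous φ) (hψ : Continuous ψ)
    (lam lam₁ lam₂ : ℝ) (h0 : 0 < lam) (h01 : lam < lam₁) (h12 : lam₁ < lam₂)
    (h21 : lam₂ < 1)
    (hdom : ∀ x : X, φ x + ψ (f x) < 2 * Real.log lam)
    (δ : ℝ) (hδ : 0 < δ) (q : X)
    (hper : ∃ m : ℕ, 1 ≤ m ∧ (⇑f)^[m] q = q)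
    (hnet : ∀ x : X, ∃ i : ℤ, dist x ((f.toEquiv ^ i) q) < δ)
    (hqφ : ∀ k : ℕ, 1 ≤ k →
      ∑ i ∈ Finset.range k, φ ((f.toEquiv ^ (i : ℤ)) q) ≤ k * Real.log lam)
    (hqψ : ∀ k : ℕ, 1 ≤ k →
      ∑ i ∈ Finset.range k, ψ ((f.toEquiv ^ (-(i : ℤ))) q) ≤ k * Real.log lam)
    (b : X)
    (hbad : ∀ k : ℕ, 1 ≤ k → 0 ≤ ∑ i ∈ Finset.range k, φ ((⇑f)^[i] b)) :
    ∃ n : ℕ, 1 ≤ n ∧ ∃ x : ℕ → X,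
      x 0 = q ∧ x n = q ∧
      (∀ i : ℕ, i < n → dist (f (x i)) (x (i + 1)) < δ) ∧
      (∀ k : ℕ, 1 ≤ k → k ≤ n →
        (∑ i ∈ Finset.range k, φ (x i) < k * Real.log lam₂) ∧
        (∑ i ∈ Finset.Icc k n, ψ (x i) < ((n : ℝ) - k + 1) * Real.log lam₂)) ∧
      (n : ℝ) * Real.log lam₁ < ∑ i ∈ Finset.range n, φ (x i) := by
  classical
  obtain ⟨m, hm1, hmq⟩ := hper
  have h01' : 0 < lam₁ := lt_trans h0 h01
  have h02' : 0 < lam₂ := lt_trans h01' h12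
  set α := Real.log lam with hαdef
  set β₁ := Real.log lam₁ with hβ₁def
  set β₂ := Real.log lam₂ with hβ₂def
  have hab : α < β₁ := Real.log_lt_log h0 h01
  have hbb : β₁ < β₂ := Real.log_lt_log h01' h12
  have hb0 : β₂ < 0 := Real.log_neg h02' h21
  have hab2 : α < β₂ := hab.trans hbb
  have hb10 : β₁ < 0 := hbb.trans hb0
  have ha0 : α < 0 := hab.trans hb10
  -- a uniform bound M on |φ| and |ψ|
  obtain ⟨M, hM1, hMφ, hMψ⟩ : ∃ M : ℝ, 1 ≤ M ∧ (∀ y, |φ y| ≤ M) ∧ (∀ y, |ψ y| ≤ M) := by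
    have hne : Nonempty X := ⟨q⟩
    obtain ⟨x₀, -, hx₀⟩ := isCompact_univ.exists_isMaxOn Set.univ_nonempty
      ((hφ.abs.add hψ.abs).continuousOn)
    refine ⟨|φ x₀| + |ψ x₀| + 1,
      by have h1 := abs_nonneg (φ x₀); have h2 := abs_nonneg (ψ x₀); linarith,
      fun y => ?_, fun y => ?_⟩ <;>
    · have h := isMaxOn_iff.mp hx₀ y (Set.mem_univ y)
      simp only [Pi.add_apply] at h
      have h1 := abs_nonneg (φ y); have h2 := abs_nonneg (ψ y)
      linarith
  -- the orbit of q
  obtain ⟨g, hg⟩ : ∃ g : ℤ → X, g = fun t => (f.toEquiv ^ t) q := ⟨_, rfl⟩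
  have gnat : ∀ (k : ℕ), g (k : ℤ) = (⇑f)^[k] q := by
    intro k; rw [hg]; exact homeo_perm_pow_apply f k q
  have g0 : g 0 = q := by simpa using gnat 0
  have gm : g (m : ℤ) = q := by rw [gnat]; exact hmq
  have gsucc : ∀ t : ℤ, g (1 + t) = f (g t) := by
    intro t; rw [hg]; simp only
    rw [zpow_add, Equiv.Perm.mul_apply, zpow_one]; rfl
  have gshift : ∀ t : ℤ, g (t + m) = g t := by
    intro t; rw [hg]; simp only
    rw [zpow_add, Equiv.Perm.mul_apply]
    have : (f.toEquiv ^ (m : ℤ)) q = q := by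
      have := gm; rw [hg] at this; exact this
    rw [this]
  have gmul : ∀ (t : ℤ) (d : ℤ), g (t + d * m) = g t := by
    intro t d
    induction d using Int.induction_on with
    | zero => simp
    | succ k ih =>
      have h1 : t + ((k : ℤ) + 1) * m = (t + k * m) + m := by ring
      rw [h1, gshift, ih]
    | pred k ih =>
      have h1 : (t + (-(k : ℤ) - 1) * m) + m = t + (-(k : ℤ)) * m := by ring
      calc g (t + (-(k : ℤ) - 1) * m) = g ((t + (-(k : ℤ) - 1) * m) + m) := (gshift _).symm
      _ = g (t + (-(k : ℤ)) * m) := by rw [h1]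
      _ = g t := ih
  have geq : ∀ a c : ℤ, a % (m : ℤ) = c % (m : ℤ) → g a = g c := by
    intro a c h
    have ha : a = a % m + (a / m) * m := by
      have := Int.mul_ediv_add_emod a m; linarith
    have hc : c = c % m + (c / m) * m := by
      have := Int.mul_ediv_add_emod c m; linarith
    rw [ha, hc, gmul, gmul, h]
  -- constants
  set K := M - β₂ with hKdef
  have hK0 : 0 < K := by simp only [hKdef]; linarith
  set C' := (m : ℝ) * K + 1 with hC'def
  have hC'0 : 0 < C' := by
    have : (0:ℝ) ≤ (m:ℝ) * K := mul_nonneg (Nat.cast_nonneg m) hK0.le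
    simp only [hC'def]; linarith
  set C₀ := ((m : ℝ) + 1) * (M - α) with hC₀def
  have hMα : 0 < M - α := by linarith
  have hC₀0 : 0 < C₀ := by
    have : (0:ℝ) < (m:ℝ) + 1 := by positivity
    exact mul_pos this hMα
  set C₁ := C' + 3 * K + (m : ℝ) * M + 1 with hC₁def
  have hmM0 : (0:ℝ) ≤ (m:ℝ) * M := mul_nonneg (Nat.cast_nonneg m) (by linarith)
  have hC₁0 : 0 < C₁ := by simp only [hC₁def]; linarith
  have hba2 : 0 < β₂ - α := by linarith
  have hbb2 : 0 < β₂ - β₁ := by linarith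
  obtain ⟨L₀, hL₀⟩ := exists_nat_ge ((K + C₀ + 1) / (2 * (β₂ - α)))
  have hL₀key : K + C₀ + 1 ≤ 2 * (L₀ : ℝ) * (β₂ - α) := by
    rw [div_le_iff₀ (by linarith : (0:ℝ) < 2 * (β₂ - α))] at hL₀
    linarith
  -- first jump target
  obtain ⟨i₁, hi₁⟩ := hnet b
  have hi₁' : dist b (g i₁) < δ := by rw [hg]; exact hi₁
  have hm0 : (m : ℤ) ≠ 0 := by
    have : m ≠ 0 := by omega
    exact_mod_cast this
  have hm0' : (0:ℤ) < (m:ℤ) := by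
    have : 0 < m := hm1
    exact_mod_cast this
  set i₀ : ℕ := (i₁ % (m : ℤ)).toNat with hi₀def
  have hi₀m : (i₀ : ℤ) = i₁ % (m : ℤ) := Int.toNat_of_nonneg (Int.emod_nonneg _ hm0)
  have hi₀lt : i₀ < m := by
    have h1 : i₁ % (m : ℤ) < m := Int.emod_lt_of_pos _ hm0'
    omega
  -- choose P
  obtain ⟨c, hc⟩ := exists_nat_ge
    (max ((2 * K + C' + K * (L₀ : ℝ) + 1) / (β₂ - α)) (C₁ / (β₂ - β₁)))
  set P := i₀ + c * m with hPdef
  have hcP : (c : ℝ) ≤ (P : ℝ) := by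
    have : c ≤ P := by
      calc c = c * 1 := (mul_one c).symm
      _ ≤ c * m := Nat.mul_le_mul_left c hm1
      _ ≤ P := Nat.le_add_left _ _
    exact_mod_cast this
  have hPA : 2 * K + C' + K * (L₀ : ℝ) + 1 ≤ (P : ℝ) * (β₂ - α) := by
    have h1 : (2 * K + C' + K * (L₀ : ℝ) + 1) / (β₂ - α) ≤ (c : ℝ) :=
      le_trans (le_max_left _ _) hc
    rw [div_le_iff₀ hba2] at h1
    exact h1.trans (mul_le_mul_of_nonneg_right hcP hba2.le)
  have hPB : C₁ ≤ (P : ℝ) * (β₂ - β₁) := by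
    have h1 : C₁ / (β₂ - β₁) ≤ (c : ℝ) := le_trans (le_max_right _ _) hc
    rw [div_le_iff₀ hbb2] at h1
    exact h1.trans (mul_le_mul_of_nonneg_right hcP hbb2.le)
  have hP1 : 1 ≤ P := by
    by_contra h
    have hP0 : P = 0 := by omega
    rw [hP0] at hPA
    have hKL : (0:ℝ) ≤ K * (L₀ : ℝ) := mul_nonneg hK0.le (Nat.cast_nonneg _)
    simp at hPA
    linarith
  have hgP : g (P : ℤ) = g i₁ := by
    apply geq
    have : (P : ℤ) = (i₀ : ℤ) + (c : ℤ) * m := by push_cast [hPdef]; ring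
    rw [this, hi₀m, Int.add_mul_emod_self_right, Int.emod_emod_of_dvd _ dvd_rfl]
  have hP1r : (1:ℝ) ≤ (P:ℝ) := by exact_mod_cast hP1
  -- Birkhoff sums along q (prefix) and along b
  set SP := ∑ i ∈ Finset.range P, φ (g (i : ℤ)) with hSPdef
  have hSPα : SP ≤ (P : ℝ) * α := by
    have := hqφ P hP1
    simp only [hSPdef, hg]
    exact this
  set D := (P : ℝ) * β₂ - SP with hDdef
  have hDge : (P : ℝ) * (β₂ - α) ≤ D := by
    simp only [hDdef]
    have : (P:ℝ) * (β₂ - α) = (P:ℝ) * β₂ - (P:ℝ) * α := by ring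
    rw [this]
    linarith
  set H' := D - 2 * K - C' with hH'def
  have hH'ge : K * (L₀ : ℝ) + 1 ≤ H' := by simp only [hH'def]; linarith
  have hH'0 : 0 < H' := by
    have : (0:ℝ) ≤ K * (L₀:ℝ) := mul_nonneg hK0.le (Nat.cast_nonneg _)
    linarith
  set S : ℕ → ℝ := fun j => ∑ i ∈ Finset.range j, φ ((⇑f)^[i] b) with hSdef
  have hS0 : ∀ j, 0 ≤ S j := by
    intro j
    rcases Nat.eq_zero_or_pos j with h | h
    · simp [hSdef, h]
    · exact hbad j h
  have hSsplit : ∀ a d : ℕ, S (a + d) = S a + ∑ u ∈ Finset.range d, φ ((⇑f)^[a + u] b) := by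
    intro a d
    simp only [hSdef]
    exact Finset.sum_range_add _ a d
  have hSub : ∀ j : ℕ, S j ≤ (j : ℝ) * M := by
    intro j
    calc S j ≤ ∑ i ∈ Finset.range j, M :=
      Finset.sum_le_sum fun i _ => (abs_le.mp (hMφ _)).2
    _ = (j : ℝ) * M := by simp [mul_comm]
  set U : ℕ → ℝ := fun j => S j - (j : ℝ) * β₂ with hUdef
  have hU0 : U 0 = 0 := by simp [hUdef, hSdef]
  have hUS : ∀ j, S j = U j + (j : ℝ) * β₂ := by intro j; simp only [hUdef]; ring
  have hUstep : ∀ j, U (j + 1) ≤ U j + K ∧ U j ≤ U (j + 1) + K := by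
    intro j
    have h1 : S (j + 1) = S j + φ ((⇑f)^[j] b) := by
      simp only [hSdef]; exact Finset.sum_range_succ _ j
    have h2 := abs_le.mp (hMφ ((⇑f)^[j] b))
    have h4 : U (j + 1) = U j + φ ((⇑f)^[j] b) - β₂ := by
      simp only [hUdef, h1]
      push_cast
      ring
    constructor <;> rw [h4, hKdef] <;> linarith [h2.1, h2.2]
  have hUub : ∀ j, U j ≤ (j : ℝ) * K := by
    intro j
    have := hSub j
    simp only [hUdef, hKdef]
    have h3 : (j:ℝ) * (M - β₂) = (j:ℝ)*M - (j:ℝ)*β₂ := by ring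
    rw [h3]
    linarith
  have hUlb : ∀ j : ℕ, (j : ℝ) * (-β₂) ≤ U j := by
    intro j
    have := hS0 j
    simp only [hUdef]
    have h3 : (j:ℝ) * (-β₂) = 0 - (j:ℝ)*β₂ := by ring
    rw [h3]
    linarith
  -- choose L by a stopping time
  have hex : ∃ j : ℕ, H' < U j := by
    obtain ⟨j, hj⟩ := exists_nat_gt (H' / (-β₂))
    refine ⟨j, ?_⟩
    rw [div_lt_iff₀ (by linarith : (0:ℝ) < -β₂)] at hj
    exact lt_of_lt_of_le hj (hUlb j)
  set L := Nat.find hex with hLdef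
  have hUL : H' < U L := Nat.find_spec hex
  have hLmin : ∀ j, j < L → U j ≤ H' := fun j hj => not_lt.mp (Nat.find_min hex hj)
  have hL1 : 1 ≤ L := by
    rcases Nat.eq_zero_or_pos L with h | h
    · exfalso; rw [h, hU0] at hUL; linarith
    · exact h
  have hULub : U L ≤ H' + K := by
    have h1 : U (L - 1) ≤ H' := hLmin _ (by omega)
    have h2 := (hUstep (L - 1)).1
    rw [Nat.sub_add_cancel hL1] at h2
    linarith
  have hUL1ub : U (L + 1) ≤ H' + 2 * K := le_trans (hUstep L).1 (by linarith)
  have hUL1lb : H' - K < U (L + 1) := by have := (hUstep L).2; linarith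
  have hUjub : ∀ j, j ≤ L + 1 → U j ≤ H' + 2 * K := by
    intro j hj
    rcases lt_or_ge j L with h | h
    · exact le_trans (hLmin j h) (by linarith)
    · have hj2 : j = L ∨ j = L + 1 := by omega
      rcases hj2 with rfl | rfl
      · exact le_trans hULub (by linarith)
      · exact hUL1ub
  have hLL₀ : (L₀ : ℝ) ≤ (L : ℝ) := by
    by_contra h
    push_neg at h
    have h1 := hUub L
    have h2 : K * (L:ℝ) < K * (L₀:ℝ) := by
      apply mul_lt_mul_of_pos_left h hK0
    have := hH'ge
    rw [mul_comm] at h1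
    linarith
  have hLkey : K + C₀ + 1 ≤ 2 * (L : ℝ) * (β₂ - α) := by
    have : 2 * (L₀:ℝ) * (β₂ - α) ≤ 2 * (L:ℝ) * (β₂ - α) := by
      apply mul_le_mul_of_nonneg_right _ hba2.le
      linarith
    linarith
  -- second jump target
  obtain ⟨i₂, hi₂⟩ := hnet ((⇑f)^[L + 1] b)
  have hi₂' : dist ((⇑f)^[L + 1] b) (g i₂) < δ := by rw [hg]; exact hi₂
  set j0 : ℕ := (i₂ % (m : ℤ)).toNat with hj0def
  have hj0m : (j0 : ℤ) = i₂ % (m : ℤ) := Int.toNat_of_nonneg (Int.emod_nonneg _ hm0)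
  have hj0lt : j0 < m := by
    have h1 : i₂ % (m : ℤ) < m := Int.emod_lt_of_pos _ hm0'
    omega
  have hgj0 : g (j0 : ℤ) = g i₂ := by
    apply geq
    rw [hj0m, Int.emod_emod_of_dvd _ dvd_rfl]
  set r := m - j0 with hrdef
  have hr1 : 1 ≤ r := by omega
  have hrm : r ≤ m := by omega
  set n := P + L + 1 + r with hndef
  have hn1 : 1 ≤ n := by omega
  -- the pseudo-orbit
  set x : ℕ → X := fun i =>
    if i < P then g (i : ℤ)
    else if i ≤ P + L then (⇑f)^[i - P] b
    else g ((j0 : ℤ) + (i : ℤ) - ((P : ℤ) + L + 1)) with hxdef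
  have hx_pre : ∀ i, i < P → x i = g (i : ℤ) := by
    intro i hi; simp only [hxdef]; rw [if_pos hi]
  have hx_seg : ∀ j, j ≤ L → x (P + j) = (⇑f)^[j] b := by
    intro j hj
    simp only [hxdef]
    rw [if_neg (by omega), if_pos (by omega)]
    congr 1
    omega
  have hx_tail : ∀ t : ℕ, x (P + L + 1 + t) = g ((j0 : ℤ) + t) := by
    intro t
    simp only [hxdef]
    rw [if_neg (by omega), if_neg (by omega)]
    congr 1
    push_cast
    ring
  have hx0 : x 0 = q := by
    rw [hx_pre 0 hP1]
    exact g0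
  have hxn : x n = q := by
    have h1 : n = P + L + 1 + r := hndef
    rw [h1, hx_tail r]
    have h2 : (j0 : ℤ) + r = (m : ℤ) := by omega
    rw [h2, gm]
  -- pseudo-orbit property
  have hstep : ∀ i : ℕ, i < n → dist (f (x i)) (x (i + 1)) < δ := by
    intro i hi
    rcases lt_or_ge (i + 1) P with h1 | h1
    · -- inside the q-prefix
      rw [hx_pre i (by omega), hx_pre (i + 1) h1]
      have : ((i:ℕ) + 1 : ℤ) = 1 + (i : ℤ) := by push_cast; ring
      rw [show (((i + 1 : ℕ)) : ℤ) = 1 + (i : ℤ) by push_cast; ring, gsucc]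
      simp [hδ]
    · rcases lt_or_ge i P with h2 | h2
      · -- i + 1 = P : jump to b
        have hiP : i + 1 = P := by omega
        rw [hx_pre i (by omega)]
        have h3 : x (i + 1) = b := by
          rw [hiP, show P = P + 0 by ring, hx_seg 0 (by omega)]
          rfl
        rw [h3]
        have h4 : f (g (i : ℤ)) = g (P : ℤ) := by
          rw [← gsucc]
          congr 1
          omega
        rw [h4, hgP, dist_comm]
        exact hi₁'
      · rcases lt_or_ge i (P + L) with h3 | h3
        · -- inside the b-segment
          have h4 : i = P + (i - P) := by omega
          rw [h4, hx_seg (i - P) (by omega),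
            show P + (i - P) + 1 = P + (i - P + 1) by omega, hx_seg (i - P + 1) (by omega),
            Function.iterate_succ_apply']
          simp [hδ]
        · rcases eq_or_lt_of_le h3 with h4 | h4
          · -- i = P + L : jump back to the orbit of q
            have h5 : x i = (⇑f)^[L] b := by rw [← h4, hx_seg L le_rfl]
            have h6 : x (i + 1) = g (j0 : ℤ) := by
              have h8 : i + 1 = P + L + 1 + 0 := by omega
              rw [h8, hx_tail 0]
              norm_num
            rw [h5, h6]
            have h7 : f ((⇑f)^[L] b) = (⇑f)^[L + 1] b := (Function.iterate_succ_apply' f L b).symm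
            rw [h7]
            simpa using (hgj0 ▸ hi₂')
          · -- inside the q-tail
            have h5 : i = P + L + 1 + (i - (P + L + 1)) := by omega
            rw [h5, hx_tail, show P + L + 1 + (i - (P + L + 1)) + 1 = P + L + 1 + (i - (P + L + 1) + 1) by omega,
              hx_tail]
            rw [show (j0 : ℤ) + ((i : ℕ) - (P + L + 1) + 1 : ℕ) = 1 + ((j0 : ℤ) + ((i : ℕ) - (P + L + 1) : ℕ)) by push_cast; ring,
              gsucc]
            simp [hδ]
  -- sums of φ along the pseudo-orbit
  have hqφg : ∀ k, 1 ≤ k → ∑ i ∈ Finset.range k, φ (g (i : ℤ)) ≤ (k : ℝ) * α := by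
    intro k hk; simp only [hg]; exact hqφ k hk
  have hqψg : ∀ k, 1 ≤ k → ∑ i ∈ Finset.range k, ψ (g (-(i : ℤ))) ≤ (k : ℝ) * α := by
    intro k hk; simp only [hg]; exact hqψ k hk
  have hPhipre : ∀ k, k ≤ P → ∑ i ∈ Finset.range k, φ (x i) = ∑ i ∈ Finset.range k, φ (g (i : ℤ)) := by
    intro k hk
    refine Finset.sum_congr rfl fun i hi => ?_
    rw [hx_pre i (by have := Finset.mem_range.mp hi; omega)]
  have hPhiseg : ∀ j, j ≤ L + 1 → ∑ i ∈ Finset.range (P + j), φ (x i) = SP + S j := by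
    intro j hj
    rw [Finset.sum_range_add]
    congr 1
    · rw [hPhipre P le_rfl]
    · simp only [hSdef]
      refine Finset.sum_congr rfl fun u hu => ?_
      rw [hx_seg u (by have := Finset.mem_range.mp hu; omega)]
  have hPhitail : ∀ t, t ≤ r → ∑ i ∈ Finset.range (P + L + 1 + t), φ (x i)
      = SP + S (L + 1) + ∑ u ∈ Finset.range t, φ (g ((j0 : ℤ) + u)) := by
    intro t ht
    rw [show P + L + 1 + t = P + (L + 1) + t by ring, Finset.sum_range_add, hPhiseg (L + 1) le_rfl]
    congr 1
    refine Finset.sum_congr rfl fun u hu => ?_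
    rw [show P + (L + 1) + u = P + L + 1 + u by ring, hx_tail u]
  have htub : ∀ t : ℕ, ∑ u ∈ Finset.range t, φ (g ((j0 : ℤ) + u)) ≤ (t : ℝ) * M := by
    intro t
    calc ∑ u ∈ Finset.range t, φ (g ((j0 : ℤ) + u)) ≤ ∑ u ∈ Finset.range t, M :=
      Finset.sum_le_sum fun u _ => (abs_le.mp (hMφ _)).2
    _ = (t : ℝ) * M := by simp [mul_comm]
  have htlb : ∀ t : ℕ, -((t : ℝ) * M) ≤ ∑ u ∈ Finset.range t, φ (g ((j0 : ℤ) + u)) := by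
    intro t
    calc -((t : ℝ) * M) = ∑ u ∈ Finset.range t, (-M) := by simp [mul_comm]
    _ ≤ ∑ u ∈ Finset.range t, φ (g ((j0 : ℤ) + u)) :=
      Finset.sum_le_sum fun u _ => (abs_le.mp (hMφ _)).1
  have hH'eq : H' = (P : ℝ) * β₂ - SP - 2 * K - C' := by rw [hH'def, hDdef]
  -- condition (1), φ part
  have hphi : ∀ k, 1 ≤ k → k ≤ n → ∑ i ∈ Finset.range k, φ (x i) < (k : ℝ) * β₂ := by
    intro k hk1 hkn
    have hk1r : (1 : ℝ) ≤ (k : ℝ) := by exact_mod_cast hk1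
    rcases le_or_gt k P with hkP | hkP
    · rw [hPhipre k hkP]
      calc ∑ i ∈ Finset.range k, φ (g (i : ℤ)) ≤ (k : ℝ) * α := hqφg k hk1
      _ < (k : ℝ) * β₂ := by
        apply mul_lt_mul_of_pos_left hab2
        linarith
    · rcases le_or_gt k (P + L + 1) with hkL | hkL
      · have hj : k = P + (k - P) := by omega
        set j := k - P with hjdef
        have hj1 : 1 ≤ j := by omega
        have hjL : j ≤ L + 1 := by omega
        rw [hj, hPhiseg j hjL]
        have hU := hUjub j hjL
        have hSj := hUS j
        have hcast : ((P + j : ℕ) : ℝ) = (P : ℝ) + (j : ℝ) := by push_cast; ring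
        rw [hcast]
        have hexp : ((P : ℝ) + (j : ℝ)) * β₂ = (P : ℝ) * β₂ + (j : ℝ) * β₂ := by ring
        rw [hexp]
        linarith
      · have ht : k = P + L + 1 + (k - (P + L + 1)) := by omega
        set t := k - (P + L + 1) with htdef
        have ht1 : 1 ≤ t := by omega
        have htr : t ≤ r := by omega
        rw [ht, hPhitail t htr]
        have hU := hUjub (L + 1) le_rfl
        have hSj := hUS (L + 1)
        have hcast : ((L + 1 : ℕ) : ℝ) * β₂ = (L : ℝ) * β₂ + β₂ := by push_cast; ring
        rw [hcast] at hSj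
        have h5 := htub t
        have htm : (t : ℝ) ≤ (m : ℝ) := by exact_mod_cast le_trans htr hrm
        have h6 : (t : ℝ) * K ≤ (m : ℝ) * K := mul_le_mul_of_nonneg_right htm hK0.le
        have h7 : (t : ℝ) * K = (t : ℝ) * M - (t : ℝ) * β₂ := by rw [hKdef]; ring
        have hcast2 : ((P + L + 1 + t : ℕ) : ℝ) * β₂
            = (P : ℝ) * β₂ + (L : ℝ) * β₂ + β₂ + (t : ℝ) * β₂ := by push_cast; ring
        rw [hcast2]
        have hC'e : C' = (m : ℝ) * K + 1 := hC'def
        linarith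
  -- condition (2)
  have hphi2 : (n : ℝ) * β₁ < ∑ i ∈ Finset.range n, φ (x i) := by
    have h1 : ∑ i ∈ Finset.range n, φ (x i)
        = SP + S (L + 1) + ∑ u ∈ Finset.range r, φ (g ((j0 : ℤ) + u)) := by
      rw [hndef]; exact hPhitail r le_rfl
    have h2 := htlb r
    have h3 := hUL1lb
    have hSj := hUS (L + 1)
    have hcast : ((L + 1 : ℕ) : ℝ) * β₂ = (L : ℝ) * β₂ + β₂ := by push_cast; ring
    rw [hcast] at hSj
    have hrM : (r : ℝ) * M ≤ (m : ℝ) * M := by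
      apply mul_le_mul_of_nonneg_right _ (by linarith : (0:ℝ) ≤ M)
      exact_mod_cast hrm
    have hcastn : (n : ℝ) * β₁ = (P : ℝ) * β₁ + (L : ℝ) * β₁ + β₁ + (r : ℝ) * β₁ := by
      rw [hndef]; push_cast; ring
    have hrβ : (r : ℝ) * β₁ ≤ 0 :=
      mul_nonpos_of_nonneg_of_nonpos (Nat.cast_nonneg r) hb10.le
    have hLβ : 0 ≤ ((L : ℝ) + 1) * (β₂ - β₁) := by positivity
    have hPexp : (P : ℝ) * (β₂ - β₁) = (P : ℝ) * β₂ - (P : ℝ) * β₁ := by ring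
    have hLexp : ((L : ℝ) + 1) * (β₂ - β₁) = (L : ℝ) * β₂ + β₂ - (L : ℝ) * β₁ - β₁ := by ring
    have hC₁e : C₁ = C' + 3 * K + (m : ℝ) * M + 1 := hC₁def
    rw [hcastn, h1]
    linarith [hPB]
  -- ψ suffix sums : tail part (along the backward orbit of q)
  have hTA : ∀ k, P + L + 1 ≤ k → k ≤ n → ∑ i ∈ Finset.Icc k n, ψ (x i) ≤ ((n : ℝ) - k + 1) * α := by
    intro k h1 h2
    rw [← Finset.Ico_add_one_right_eq_Icc, Finset.sum_Ico_eq_sum_range, ← Finset.sum_range_reflect]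
    have hcongr : ∀ u ∈ Finset.range (n + 1 - k), ψ (x (k + (n + 1 - k - 1 - u))) = ψ (g (-(u : ℤ))) := by
      intro u hu
      have hu' : u < n + 1 - k := Finset.mem_range.mp hu
      have h5 : k + (n + 1 - k - 1 - u) = P + L + 1 + (n - u - (P + L + 1)) := by omega
      rw [h5, hx_tail]
      congr 1
      have h6 : (j0 : ℤ) + ((n - u - (P + L + 1) : ℕ) : ℤ) = -(u : ℤ) + 1 * (m : ℤ) := by
        have hj0r : j0 + r = m := by omega
        omega
      rw [h6, gmul]
    rw [Finset.sum_congr rfl hcongr]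
    have h7 := hqψg (n + 1 - k) (by omega)
    have h8 : ((n + 1 - k : ℕ) : ℝ) = (n : ℝ) - k + 1 := by
      have : k ≤ n + 1 := by omega
      push_cast [Nat.cast_sub this]
      ring
    rw [h8] at h7
    exact h7
  have hTA1 : ∑ i ∈ Finset.Icc (P + L + 1) n, ψ (x i) ≤ ((r : ℝ) + 1) * α := by
    have := hTA (P + L + 1) le_rfl (by omega)
    have h8 : (n : ℝ) - (P + L + 1 : ℕ) + 1 = (r : ℝ) + 1 := by
      rw [hndef]; push_cast; ring
    rw [h8] at this
    exact this
  -- ψ suffix sums : splitting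
  have hTsplit : ∀ k, k ≤ P + L → ∑ i ∈ Finset.Icc k n, ψ (x i)
      = ∑ i ∈ Finset.Icc k (P + L), ψ (x i) + ∑ i ∈ Finset.Icc (P + L + 1) n, ψ (x i) := by
    intro k hk
    rw [← Finset.Ico_add_one_right_eq_Icc, ← Finset.Ico_add_one_right_eq_Icc, ← Finset.Ico_add_one_right_eq_Icc,
      ← Finset.sum_Ico_consecutive (fun i => ψ (x i)) (by omega : k ≤ P + L + 1) (by omega : P + L + 1 ≤ n + 1)]
  -- ψ sums over the b-segment
  have hB1 : ∀ jj, jj < L → ∑ i ∈ Finset.Icc (P + 1 + jj) (P + L), ψ (x i)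
      < 2 * ((L : ℝ) - jj) * α - ((L : ℝ) - jj) * β₂ := by
    intro jj hjj
    have hv1 : 1 ≤ L - jj := by omega
    rw [← Finset.Ico_add_one_right_eq_Icc, Finset.sum_Ico_eq_sum_range]
    have hv : P + L + 1 - (P + 1 + jj) = L - jj := by omega
    rw [hv]
    have hlt : ∀ u ∈ Finset.range (L - jj), ψ (x (P + 1 + jj + u)) < 2 * α - φ ((⇑f)^[jj + u] b) := by
      intro u hu
      have hu' : u < L - jj := Finset.mem_range.mp hu
      have hxv : x (P + 1 + jj + u) = (⇑f)^[jj + u + 1] b := by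
        rw [show P + 1 + jj + u = P + (jj + u + 1) by ring, hx_seg _ (by omega)]
      rw [hxv, Function.iterate_succ_apply']
      have := hdom ((⇑f)^[jj + u] b)
      linarith
    have hsum := Finset.sum_lt_sum_of_nonempty (Finset.nonempty_range_iff.mpr (by omega)) hlt
    have hrhs : ∑ u ∈ Finset.range (L - jj), (2 * α - φ ((⇑f)^[jj + u] b))
        = 2 * ((L : ℝ) - jj) * α - (S L - S jj) := by
      rw [Finset.sum_sub_distrib, Finset.sum_const, Finset.card_range]
      have h9 := hSsplit jj (L - jj)
      rw [show jj + (L - jj) = L by omega] at h9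
      have h10 : ∑ u ∈ Finset.range (L - jj), φ ((⇑f)^[jj + u] b) = S L - S jj := by linarith
      rw [h10, nsmul_eq_mul]
      have : ((L - jj : ℕ) : ℝ) = (L : ℝ) - jj := by
        push_cast [Nat.cast_sub (by omega : jj ≤ L)]
        ring
      rw [this]
      ring
    rw [hrhs] at hsum
    have hSLjj : ((L : ℝ) - jj) * β₂ ≤ S L - S jj := by
      have h11 := hUS L
      have h12 := hUS jj
      have h13 : U jj ≤ H' := hLmin jj hjj
      have h14 : ((L : ℝ) - jj) * β₂ = (L : ℝ) * β₂ - (jj : ℝ) * β₂ := by ring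
      rw [h14]
      linarith [hUL]
    linarith
  -- ψ suffix sums over the b-segment plus tail
  have hTmid : ∀ k, P + 1 ≤ k → k ≤ P + L → ∑ i ∈ Finset.Icc k n, ψ (x i)
      < 2 * ((P : ℝ) + L + 1 - k) * α - ((P : ℝ) + L + 1 - k) * β₂ + ((r : ℝ) + 1) * α := by
    intro k hk1 hk2
    rw [hTsplit k (by omega)]
    have h1 := hB1 (k - 1 - P) (by omega)
    rw [show P + 1 + (k - 1 - P) = k by omega] at h1
    have h2 : ((L : ℝ) - (k - 1 - P : ℕ)) = (P : ℝ) + L + 1 - k := by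
      have hc : (k - 1 - P) + 1 + P = k := by omega
      have hc2 : ((k - 1 - P : ℕ) : ℝ) + 1 + (P : ℝ) = (k : ℝ) := by exact_mod_cast hc
      linarith
    rw [h2] at h1
    linarith [hTA1]
  -- ψ over the q-prefix
  have hpsi_pre : ∀ k, k < P → ∑ i ∈ Finset.Ico k P, ψ (x i) ≤ ((P : ℝ) - k) * α + C₀ := by
    intro k hkP
    have hxval : ∑ i ∈ Finset.Ico k P, ψ (x i)
        = ∑ t ∈ Finset.range (P - k), ψ (g ((i₀ : ℤ) - 1 - t)) := by
      rw [Finset.sum_Ico_eq_sum_range, ← Finset.sum_range_reflect]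
      refine Finset.sum_congr rfl fun t ht => ?_
      have ht' : t < P - k := Finset.mem_range.mp ht
      rw [hx_pre _ (by omega : k + (P - k - 1 - t) < P)]
      congr 1
      have hce : ((k + (P - k - 1 - t) : ℕ) : ℤ) = ((i₀ : ℤ) - 1 - t) + (c : ℤ) * m := by
        have hPe : P = i₀ + c * m := hPdef
        omega
      rw [hce, gmul]
    rw [hxval]
    have hwm : ((P - k : ℕ) : ℝ) = (P : ℝ) - k := by
      push_cast [Nat.cast_sub (le_of_lt hkP)]; ring
    rcases le_or_gt (P - k) i₀ with hcase | hcase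
    · -- short prefix : trivial bound
      have h1 : ∑ t ∈ Finset.range (P - k), ψ (g ((i₀ : ℤ) - 1 - t)) ≤ ((P - k : ℕ) : ℝ) * M := by
        calc ∑ t ∈ Finset.range (P - k), ψ (g ((i₀ : ℤ) - 1 - t)) ≤ ∑ t ∈ Finset.range (P - k), M :=
          Finset.sum_le_sum fun t _ => (abs_le.mp (hMψ _)).2
        _ = ((P - k : ℕ) : ℝ) * M := by simp [mul_comm]
      have h2 : ((P - k : ℕ) : ℝ) ≤ (m : ℝ) := by
        have : P - k ≤ m := by omega
        exact_mod_cast this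
      have h3 : ((P - k : ℕ) : ℝ) * (M - α) ≤ (m : ℝ) * (M - α) :=
        mul_le_mul_of_nonneg_right h2 hMα.le
      have h4 : C₀ = ((m : ℝ) + 1) * (M - α) := hC₀def
      rw [← hwm]
      have e1 : ((P - k : ℕ) : ℝ) * (M - α) = ((P - k : ℕ) : ℝ) * M - ((P - k : ℕ) : ℝ) * α := by
        ring
      have e2 : ((m : ℝ) + 1) * (M - α) = (m : ℝ) * (M - α) + (M - α) := by ring
      linarith [hMα]
    · -- long prefix : use the backward sums of ψ along the orbit of q
      rw [show P - k = i₀ + (P - k - i₀) by omega, Finset.sum_range_add]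
      have hfst : ∑ t ∈ Finset.range i₀, ψ (g ((i₀ : ℤ) - 1 - t)) ≤ (i₀ : ℝ) * M := by
        calc ∑ t ∈ Finset.range i₀, ψ (g ((i₀ : ℤ) - 1 - t)) ≤ ∑ t ∈ Finset.range i₀, M :=
          Finset.sum_le_sum fun t _ => (abs_le.mp (hMψ _)).2
        _ = (i₀ : ℝ) * M := by simp [mul_comm]
      have hsnd : ∑ u ∈ Finset.range (P - k - i₀), ψ (g ((i₀ : ℤ) - 1 - ((i₀ + u : ℕ) : ℤ)))
          = ∑ u ∈ Finset.range (P - k - i₀), ψ (g (-((u : ℕ) : ℤ) - 1)) := by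
        refine Finset.sum_congr rfl fun u _ => ?_
        congr 1
        push_cast
        ring
      have hsnd2 : ∑ u ∈ Finset.range (P - k - i₀), ψ (g (-((u : ℕ) : ℤ) - 1))
          = (∑ u ∈ Finset.range (P - k - i₀ + 1), ψ (g (-(u : ℤ)))) - ψ (g 0) := by
        rw [Finset.sum_range_succ' (fun u => ψ (g (-(u : ℤ)))) (P - k - i₀)]
        have : ∀ u : ℕ, ψ (g (-((u + 1 : ℕ) : ℤ))) = ψ (g (-((u : ℕ) : ℤ) - 1)) := by
          intro u; congr 1; push_cast; ring
        rw [Finset.sum_congr rfl fun u _ => this u]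
        norm_num
      have hq1 := hqψg (P - k - i₀ + 1) (by omega)
      have hg0M : -M ≤ ψ (g 0) := by
        rw [g0]; exact (abs_le.mp (hMψ q)).1
      have hcaste : ((P - k - i₀ + 1 : ℕ) : ℝ) = (P : ℝ) - k - i₀ + 1 := by
        have h6 : (k + i₀) ≤ P := by omega
        push_cast [Nat.cast_sub (by omega : i₀ ≤ P - k), Nat.cast_sub (le_of_lt hkP)]
        ring
      rw [hcaste] at hq1
      -- now combine everything
      have hi₀M : (i₀ : ℝ) + 1 ≤ (m : ℝ) := by exact_mod_cast hi₀lt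
      have hC₀e : C₀ = ((m : ℝ) + 1) * (M - α) := hC₀def
      have key : (i₀ : ℝ) * M + (((P : ℝ) - k - i₀ + 1) * α + M) ≤ ((P : ℝ) - k) * α + C₀ := by
        have p1 : (0:ℝ) ≤ ((m : ℝ) - i₀) * M :=
          mul_nonneg (by linarith) (by linarith)
        have p2 : ((m : ℝ) + 2 - i₀) * α ≤ 0 :=
          mul_nonpos_of_nonneg_of_nonpos (by linarith) ha0.le
        have q1 : ((m : ℝ) - i₀) * M = (m : ℝ) * M - (i₀ : ℝ) * M := by ring
        have q2 : ((m : ℝ) + 2 - i₀) * α = (m : ℝ) * α + 2 * α - (i₀ : ℝ) * α := by ring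
        have q3 : (((P : ℝ) - k - i₀ + 1)) * α
            = ((P : ℝ) - k) * α - (i₀ : ℝ) * α + α := by ring
        have q4 : C₀ = (m : ℝ) * M + M - (m : ℝ) * α - α := by rw [hC₀e]; ring
        linarith
      calc ∑ t ∈ Finset.range i₀, ψ (g ((i₀ : ℤ) - 1 - t))
            + ∑ u ∈ Finset.range (P - k - i₀), ψ (g ((i₀ : ℤ) - 1 - ((i₀ + u : ℕ) : ℤ)))
          ≤ (i₀ : ℝ) * M + (((P : ℝ) - k - i₀ + 1) * α + M) := by
            rw [hsnd, hsnd2]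
            have := hq1
            have h8 := hg0M
            have h9 := hfst
            linarith
      _ ≤ ((P : ℝ) - k) * α + C₀ := key
  -- ψ suffix starting exactly at the first jump
  have hTP : ∑ i ∈ Finset.Icc P n, ψ (x i)
      < M + (2 * (L : ℝ) * α - (L : ℝ) * β₂ + ((r : ℝ) + 1) * α) := by
    rw [← Finset.Ico_add_one_right_eq_Icc, Finset.sum_eq_sum_Ico_succ_bot (by omega : P < n + 1),
      Finset.Ico_add_one_right_eq_Icc]
    have h1 : ψ (x P) ≤ M := by
      have hxP : x P = b := by
        have := hx_seg 0 (Nat.zero_le L)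
        simpa using this
      rw [hxP]; exact (abs_le.mp (hMψ b)).2
    have h2 := hTmid (P + 1) le_rfl (by omega : P + 1 ≤ P + L)
    have h3 : (P : ℝ) + L + 1 - ((P + 1 : ℕ) : ℝ) = (L : ℝ) := by push_cast; ring
    rw [h3] at h2
    linarith
  -- condition (1), ψ part
  have hpsi : ∀ k, 1 ≤ k → k ≤ n → ∑ i ∈ Finset.Icc k n, ψ (x i) < ((n : ℝ) - k + 1) * β₂ := by
    intro k hk1 hkn
    rcases le_or_gt (P + L + 1) k with hA | hA
    · have h1 := hTA k hA hkn
      have h2 : (0:ℝ) < (n : ℝ) - k + 1 := by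
        have : (k : ℝ) ≤ (n : ℝ) := by exact_mod_cast hkn
        linarith
      have h3 := mul_lt_mul_of_pos_left hab2 h2
      linarith
    · rcases le_or_gt (P + 1) k with hB | hB
      · have hk2 : k ≤ P + L := by omega
        have h1 := hTmid k hB hk2
        have hv1 : (1:ℝ) ≤ (P : ℝ) + L + 1 - k := by
          have : (k : ℝ) ≤ (P : ℝ) + L := by
            have h5 : (k : ℝ) ≤ ((P + L : ℕ) : ℝ) := by exact_mod_cast hk2
            push_cast at h5
            linarith
          linarith
        have hne : ((n : ℝ) - k + 1) = ((P : ℝ) + L + 1 - k) + (r : ℝ) + 1 := by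
          rw [hndef]; push_cast; ring
        rw [hne]
        have e1 : 0 ≤ 2 * ((P : ℝ) + L + 1 - k) * (β₂ - α) :=
          mul_nonneg (by linarith) hba2.le
        have e2 : 0 ≤ ((r : ℝ) + 1) * (β₂ - α) :=
          mul_nonneg (by positivity) hba2.le
        have q1 : 2 * ((P : ℝ) + L + 1 - k) * (β₂ - α)
            = (((P : ℝ) + L + 1 - k) + (r : ℝ) + 1) * β₂ - (2 * ((P : ℝ) + L + 1 - k) * α
              - ((P : ℝ) + L + 1 - k) * β₂ + ((r : ℝ) + 1) * α) + ((r : ℝ) + 1) * α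
              - ((r : ℝ) + 1) * β₂ := by ring
        have q2 : ((r : ℝ) + 1) * (β₂ - α) = ((r : ℝ) + 1) * β₂ - ((r : ℝ) + 1) * α := by ring
        linarith [h1]
      · have hkPle : k ≤ P := by omega
        have e2 : 0 ≤ ((r : ℝ) + 1) * (β₂ - α) := mul_nonneg (by positivity) hba2.le
        rcases eq_or_lt_of_le hkPle with hkP | hkP
        · -- k = P
          rw [hkP]
          have hne : ((n : ℝ) - P + 1) = (L : ℝ) + r + 2 := by
            rw [hndef]; push_cast; ring
          rw [hne]
          have hKe : K = M - β₂ := hKdef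
          have q1 : 2 * (L : ℝ) * (β₂ - α) = 2 * (L : ℝ) * β₂ - 2 * (L : ℝ) * α := by ring
          have q2 : ((r : ℝ) + 1) * (β₂ - α) = ((r : ℝ) + 1) * β₂ - ((r : ℝ) + 1) * α := by ring
          have q3 : ((L : ℝ) + r + 2) * β₂
              = (L : ℝ) * β₂ + ((r : ℝ) + 1) * β₂ + β₂ := by ring
          linarith [hTP, hLkey, e2, hC₀0]
        · -- k < P
          have hsplitC : ∑ i ∈ Finset.Icc k n, ψ (x i)
              = ∑ i ∈ Finset.Ico k P, ψ (x i) + ∑ i ∈ Finset.Icc P n, ψ (x i) := by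
            rw [← Finset.Ico_add_one_right_eq_Icc,
              ← Finset.sum_Ico_consecutive (fun i => ψ (x i)) (by omega : k ≤ P) (by omega : P ≤ n + 1),
              Finset.Ico_add_one_right_eq_Icc]
          rw [hsplitC]
          have h1 := hpsi_pre k hkP
          have hne : ((n : ℝ) - k + 1) = ((P : ℝ) - k) + ((L : ℝ) + r + 2) := by
            rw [hndef]; push_cast; ring
          rw [hne]
          have e3 : 0 ≤ ((P : ℝ) - k) * (β₂ - α) := by
            have : (k : ℝ) ≤ (P : ℝ) := by exact_mod_cast hkPle
            exact mul_nonneg (by linarith) hba2.le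
          have hKe : K = M - β₂ := hKdef
          have q1 : 2 * (L : ℝ) * (β₂ - α) = 2 * (L : ℝ) * β₂ - 2 * (L : ℝ) * α := by ring
          have q2 : ((r : ℝ) + 1) * (β₂ - α) = ((r : ℝ) + 1) * β₂ - ((r : ℝ) + 1) * α := by ring
          have q3 : ((P : ℝ) - k) * (β₂ - α) = ((P : ℝ) - k) * β₂ - ((P : ℝ) - k) * α := by ring
          have q4 : (((P : ℝ) - k) + ((L : ℝ) + r + 2)) * β₂
              = ((P : ℝ) - k) * β₂ + (L : ℝ) * β₂ + ((r : ℝ) + 1) * β₂ + β₂ := by ring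
          have q5 : ((P : ℝ) - k) * α = (P : ℝ) * α - (k : ℝ) * α := by ring
          linarith [h1, hTP, hLkey, e3, e2]
  exact ⟨n, hn1, x, hx0, hxn, hstep, fun k hk1 hkn => ⟨hphi k hk1 hkn, hpsi k hk1 hkn⟩, hphi2⟩
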